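/- Let V be a real Hilbert space with orthogonality as the locality relation, and let W be a closed subspace with {0} ⊊ W ⊊ V. Then W is NOT locality compatible with the orthogonality relation: there exist x, y, z ∈ V and w ∈ W with ⟨x,y⟩ = 0 and ⟨x+w, z⟩ = 0, but there is no w' ∈ W with ⟨x+w', y⟩ = 0 and ⟨x+w', z⟩ = 0 simultaneously. -/

import Mathlib

open scoped RealInnerProductSpace

/-- A closed subspace `{0} ⊊ W ⊊ V` of a real Hilbert space is not locality compatible
with the orthogonality relation. -/
theorem stmt13 {V : Type*} [NormedAddCommGroup V] [InnerProductSpace ℝ V]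
    [CompleteSpace V] (W : Submodule ℝ V) (hclosed : IsClosed (W : Set V))
    (hbot : W ≠ ⊥) (htop : W ≠ ⊤) :
    ∃ x y z : V, ∃ w ∈ W, (inner ℝ x y : ℝ) = 0 ∧ (inner ℝ (x + w) z : ℝ) = 0 ∧
      ¬ ∃ w' ∈ W, (inner ℝ (x + w') y : ℝ) = 0 ∧ (inner ℝ (x + w') z : ℝ) = 0 := by
  obtain ⟨w₀, hw₀W, hw₀⟩ := Submodule.exists_mem_ne_zero_of_ne_bot hbot
  haveI : CompleteSpace W := hclosed.completeSpace_coe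
  have horth : Wᗮ ≠ ⊥ := by
    simp only [ne_eq, Submodule.orthogonal_eq_bot_iff]
    exact htop
  obtain ⟨x', hx'W, hx'⟩ := Submodule.exists_mem_ne_zero_of_ne_bot horth
  set x : V := (‖w₀‖ / ‖x'‖) • x' with hxdef
  have hxW : x ∈ Wᗮ := Wᗮ.smul_mem _ hx'W
  have hxnorm : ‖x‖ = ‖w₀‖ := by
    rw [hxdef, norm_smul, Real.norm_eq_abs, abs_div, abs_norm, abs_norm,
      div_mul_cancel₀ _ (norm_ne_zero_iff.mpr hx')]
  have hw₀x : (inner ℝ w₀ x : ℝ) = 0 := hxW w₀ hw₀W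
  have hxw₀ : (inner ℝ x w₀ : ℝ) = 0 := by rw [real_inner_comm]; exact hw₀x
  refine ⟨x, w₀, w₀ - x, w₀, hw₀W, hxw₀, ?_, ?_⟩
  · rw [inner_sub_right, inner_add_left, inner_add_left, hxw₀, hw₀x,
      real_inner_self_eq_norm_sq, real_inner_self_eq_norm_sq, hxnorm]
    ring
  · rintro ⟨w', hw'W, h1, h2⟩
    have hw'x : (inner ℝ w' x : ℝ) = 0 := hxW w' hw'W
    have h3 : (inner ℝ (x + w') x : ℝ) = 0 := by
      have := h2
      rw [inner_sub_right, h1, zero_sub, neg_eq_zero] at this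
      exact this
    rw [inner_add_left, real_inner_self_eq_norm_sq, hw'x, add_zero] at h3
    have hx0 : x = 0 := by
      have : ‖x‖ = 0 := by nlinarith [norm_nonneg x]
      simpa using this
    rw [hx0, norm_zero] at hxnorm
    exact hw₀ (norm_eq_zero.mp hxnorm.symm)
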